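/- Let Ω be a k×k symmetric positive definite matrix, ω = √(diag Ω) the diagonal matrix of square roots of the diagonal entries of Ω, Ω_z = ω⁻¹Ωω⁻¹, α ∈ ℝ^k, δ = (1+αᵀΩ_zα)^{-1/2} Ω_zα, μ_z = √(2/π) δ, and let ξ₁, ξ₂ ∈ ℝ^k and π₁, π₂ > 0. Define ζ₀(x) = log(2Φ(x)) and w_i(y) = αᵀω⁻¹(y−ξ_i) for i = 1,2. If (ξ₁−ξ₂)ᵀω⁻¹α = 0, then for every y ∈ ℝ^k the likelihood-based discriminant function (ξ₁−ξ₂)ᵀΩ⁻¹(y − ½(ξ₁+ξ₂)) + ζ₀(w₁(y)) − ζ₀(w₂(y)) + log(π₁/π₂) equals the Fisher linear discriminant function (ξ₁−ξ₂)ᵀ(Ω − ωμ_zμ_zᵀω)⁻¹(y − ½(ξ₁+ξ₂+2ωμ_z)) + log(π₁/π₂); in particular the two discriminant rules coincide. -/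

import Mathlib

open MeasureTheory Matrix ProbabilityTheory Real

/-- Standard normal cumulative distribution function
`Φ(x) = ∫_{-∞}^x (2π)^{-1/2} exp(-u²/2) du`. -/
noncomputable def stdNormCDF (x : ℝ) : ℝ :=
  ∫ u in Set.Iic x, (2 * Real.pi) ^ (-(1:ℝ)/2) * Real.exp (-(u ^ 2) / 2)

/-- Density `φ(z; Ω) = (2π)^{-k/2} (det Ω)^{-1/2} exp(-½ zᵀ Ω⁻¹ z)` of the centred
multivariate normal distribution with covariance matrix `Ω`. -/
noncomputable def mvNormalPDF {ι : Type*} [Fintype ι] [DecidableEq ι]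
    (Ω : Matrix ι ι ℝ) (z : ι → ℝ) : ℝ :=
  (2 * Real.pi) ^ (-(Fintype.card ι : ℝ) / 2) * Ω.det ^ (-(1:ℝ)/2) *
    Real.exp (-(z ⬝ᵥ Ω⁻¹.mulVec z) / 2)

/-- Density `f(z) = 2 φ(z; Ω) Φ(αᵀ z)` of the multivariate skew-normal
distribution `SN(Ω, α)`. -/
noncomputable def snPDF {ι : Type*} [Fintype ι] [DecidableEq ι]
    (Ω : Matrix ι ι ℝ) (α : ι → ℝ) (z : ι → ℝ) : ℝ :=
  2 * mvNormalPDF Ω z * stdNormCDF (α ⬝ᵥ z)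

/-- A correlation matrix: symmetric positive definite with unit diagonal. -/
def IsCorrelationMatrix {ι : Type*} [Fintype ι] (Ω : Matrix ι ι ℝ) : Prop :=
  Ω.PosDef ∧ ∀ i, Ω i i = 1

/-- The law of the multivariate skew-normal distribution `SN(Ω, α)`:
the measure on `ι → ℝ` with density `snPDF Ω α` w.r.t. Lebesgue measure. -/
noncomputable def snMeasure {ι : Type*} [Fintype ι] [DecidableEq ι]
    (Ω : Matrix ι ι ℝ) (α : ι → ℝ) : Measure (ι → ℝ) :=
  volume.withDensity fun z => ENNReal.ofReal (snPDF Ω α z)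

/-- Chi-square density with `p` degrees of freedom. -/
noncomputable def chiSqPDF (p : ℕ) (x : ℝ) : ℝ :=
  if 0 < x then x ^ ((p:ℝ)/2 - 1) * Real.exp (-x/2) / (2 ^ ((p:ℝ)/2) * Real.Gamma ((p:ℝ)/2))
  else 0

/-- Chi-square law with `p` degrees of freedom. -/
noncomputable def chiSqMeasure (p : ℕ) : Measure ℝ :=
  volume.withDensity fun x => ENNReal.ofReal (chiSqPDF p x)


section Aux
variable {n : Type*} [Fintype n] [DecidableEq n]

lemma aux_mul_vecMulVec (A : Matrix n n ℝ) (u w : n → ℝ) :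
    A * vecMulVec u w = vecMulVec (A.mulVec u) w := by
  ext i j
  simp only [Matrix.mul_apply, vecMulVec_apply, mulVec, dotProduct, Finset.sum_mul]
  congr 1; ext x; ring

omit [DecidableEq n] in
lemma aux_vecMulVec_mul (A : Matrix n n ℝ) (u w : n → ℝ) :
    vecMulVec u w * A = vecMulVec u (Aᵀ.mulVec w) := by
  ext i j
  simp [Matrix.mul_apply, vecMulVec_apply, mulVec, dotProduct, Finset.mul_sum,
    mul_comm, mul_assoc, mul_left_comm]

omit [DecidableEq n] in
lemma aux_vecMulVec_mulVec (u w z : n → ℝ) :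
    (vecMulVec u w).mulVec z = (w ⬝ᵥ z) • u := by
  ext i
  simp [vecMulVec_apply, mulVec, dotProduct, Finset.mul_sum, mul_comm, mul_assoc, mul_left_comm]

omit [DecidableEq n] in
lemma aux_vecMulVec_smul (c : ℝ) (u w : n → ℝ) :
    vecMulVec u (c • w) = c • vecMulVec u w := by
  ext i j; simp [vecMulVec_apply]; ring

lemma aux_posdef_diag_pos {M : Matrix n n ℝ} (h : M.PosDef) (i : n) : 0 < M i i := by
  have := h.diag_pos (i := i)
  simpa using this

omit [DecidableEq n] in
lemma aux_dot_symm {A : Matrix n n ℝ} (hA : Aᵀ = A) (x z : n → ℝ) :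
    x ⬝ᵥ A.mulVec z = A.mulVec x ⬝ᵥ z := by
  rw [Matrix.dotProduct_mulVec, ← Matrix.vecMul_transpose, hA]

end Aux

theorem skewNormal_discriminant_rules_coincide {k : ℕ}
    (Ω : Matrix (Fin k) (Fin k) ℝ) (hΩ : Ω.PosDef)
    (α ξ₁ ξ₂ : Fin k → ℝ) (pr₁ pr₂ : ℝ) (hpr₁ : 0 < pr₁) (hpr₂ : 0 < pr₂)
    (dg : Matrix (Fin k) (Fin k) ℝ)
    (hdg : dg = Matrix.diagonal fun i => Real.sqrt (Ω i i))
    (Ωz : Matrix (Fin k) (Fin k) ℝ) (hΩz : Ωz = dg⁻¹ * Ω * dg⁻¹)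
    (δ : Fin k → ℝ) (hδ : δ = (1 + α ⬝ᵥ Ωz.mulVec α) ^ (-(1:ℝ)/2) • Ωz.mulVec α)
    (μz : Fin k → ℝ) (hμz : μz = Real.sqrt (2 / Real.pi) • δ)
    (hcond : (ξ₁ - ξ₂) ⬝ᵥ dg⁻¹.mulVec α = 0) (y : Fin k → ℝ) :
    (ξ₁ - ξ₂) ⬝ᵥ Ω⁻¹.mulVec (y - (1/2 : ℝ) • (ξ₁ + ξ₂))
        + Real.log (2 * stdNormCDF (α ⬝ᵥ dg⁻¹.mulVec (y - ξ₁)))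
        - Real.log (2 * stdNormCDF (α ⬝ᵥ dg⁻¹.mulVec (y - ξ₂)))
        + Real.log (pr₁ / pr₂) =
      (ξ₁ - ξ₂) ⬝ᵥ (Ω - dg * vecMulVec μz μz * dg)⁻¹.mulVec
          (y - (1/2 : ℝ) • (ξ₁ + ξ₂ + (2:ℝ) • dg.mulVec μz))
        + Real.log (pr₁ / pr₂) := by
  -- basic symmetry / invertibility facts
  have hΩT : Ωᵀ = Ω := by
    have := hΩ.1
    simpa [Matrix.IsHermitian, Matrix.conjTranspose_eq_transpose_of_trivial] using this
  have hΩdet : IsUnit Ω.det := hΩ.det_pos.ne'.isUnit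
  have hΩiT : (Ω⁻¹)ᵀ = Ω⁻¹ := by rw [Matrix.transpose_nonsing_inv, hΩT]
  have hdgT : dgᵀ = dg := by rw [hdg, Matrix.diagonal_transpose]
  have hdgdet : IsUnit dg.det := by
    rw [hdg, Matrix.det_diagonal]
    exact (Finset.prod_pos fun i _ => Real.sqrt_pos.2 (aux_posdef_diag_pos hΩ i)).ne'.isUnit
  have hdgiT : (dg⁻¹)ᵀ = dg⁻¹ := by rw [Matrix.transpose_nonsing_inv, hdgT]
  set a : Fin k → ℝ := ξ₁ - ξ₂ with ha
  set u : Fin k → ℝ := dg⁻¹.mulVec α with hu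
  -- the skewness terms coincide
  have hw : α ⬝ᵥ dg⁻¹.mulVec (y - ξ₁) = α ⬝ᵥ dg⁻¹.mulVec (y - ξ₂) := by
    have h1 : α ⬝ᵥ dg⁻¹.mulVec (y - ξ₁) - α ⬝ᵥ dg⁻¹.mulVec (y - ξ₂) = -(a ⬝ᵥ u) := by
      rw [← dotProduct_sub, ← Matrix.mulVec_sub,
        show (y - ξ₁) - (y - ξ₂) = -a by rw [ha]; abel,
        Matrix.mulVec_neg, dotProduct_neg, aux_dot_symm hdgiT, ← hu,
        dotProduct_comm]
    have := h1.trans (by rw [hcond, neg_zero])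
    linarith
  -- the quadratic form q = αᵀ Ωz α
  have hq : α ⬝ᵥ Ωz.mulVec α = u ⬝ᵥ Ω.mulVec u := by
    rw [hΩz, ← Matrix.mulVec_mulVec, ← Matrix.mulVec_mulVec, aux_dot_symm hdgiT]
  set q : ℝ := u ⬝ᵥ Ω.mulVec u with hqdef
  have hq0 : 0 ≤ q := by
    have := hΩ.posSemidef.dotProduct_mulVec_nonneg u
    simpa using this
  have h1q : (0:ℝ) < 1 + q := by linarith
  set s : ℝ := Real.sqrt (2 / Real.pi) * (1 + q) ^ (-(1:ℝ)/2) with hs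
  set v : Fin k → ℝ := dg.mulVec μz with hv
  -- v = s • Ω u
  have hvs : v = s • Ω.mulVec u := by
    rw [hv, hμz, hδ, hq, Matrix.mulVec_smul, Matrix.mulVec_smul, smul_smul, ← hs, hΩz]
    congr 1
    rw [Matrix.mulVec_mulVec, ← Matrix.mul_assoc, ← Matrix.mul_assoc,
      Matrix.mul_nonsing_inv _ hdgdet, Matrix.one_mul, ← Matrix.mulVec_mulVec, ← hu]
  -- w = Ω⁻¹ v = s • u
  have hΩinvΩ : ∀ z : Fin k → ℝ, Ω⁻¹.mulVec (Ω.mulVec z) = z := by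
    intro z
    rw [Matrix.mulVec_mulVec, Matrix.nonsing_inv_mul _ hΩdet, Matrix.one_mulVec]
  have hw' : Ω⁻¹.mulVec v = s • u := by
    rw [hvs, Matrix.mulVec_smul, hΩinvΩ]
  have hau : a ⬝ᵥ u = 0 := hcond
  -- key orthogonality
  have hav : a ⬝ᵥ Ω⁻¹.mulVec v = 0 := by
    rw [hw', dotProduct_smul, hau, smul_zero]
  -- t = vᵀ Ω⁻¹ v
  have hs2 : s * s = (2 / Real.pi) * (1 + q)⁻¹ := by
    rw [hs]
    have h2pi : (0:ℝ) ≤ 2 / Real.pi := by positivity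
    have : Real.sqrt (2 / Real.pi) * (1 + q) ^ (-(1:ℝ)/2) *
        (Real.sqrt (2 / Real.pi) * (1 + q) ^ (-(1:ℝ)/2))
        = (Real.sqrt (2 / Real.pi) * Real.sqrt (2 / Real.pi)) *
          ((1 + q) ^ (-(1:ℝ)/2) * (1 + q) ^ (-(1:ℝ)/2)) := by ring
    rw [this, Real.mul_self_sqrt h2pi, ← Real.rpow_add h1q,
      show (-(1:ℝ)/2 + -(1:ℝ)/2) = -1 by norm_num, Real.rpow_neg_one]
  set t : ℝ := v ⬝ᵥ Ω⁻¹.mulVec v with ht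
  have htval : t = (2 / Real.pi) * (q / (1 + q)) := by
    rw [ht, hw', dotProduct_smul, hvs, smul_dotProduct, smul_eq_mul, smul_eq_mul,
      ← aux_dot_symm hΩT, ← hqdef, ← mul_assoc, hs2]
    field_simp
  have hππ : (2:ℝ) / Real.pi < 1 := by
    rw [div_lt_one Real.pi_pos]
    linarith [Real.pi_gt_three]
  have ht1 : t < 1 := by
    rw [htval]
    have h1 : q / (1 + q) < 1 := by rw [div_lt_one h1q]; linarith
    have h2 : 0 ≤ q / (1 + q) := by positivity
    nlinarith
  have ht0 : 0 ≤ t := by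
    rw [htval]; positivity
  have h1t : (1:ℝ) - t ≠ 0 := by linarith
  -- the inverse of M = Ω - v vᵀ
  set M : Matrix (Fin k) (Fin k) ℝ := Ω - vecMulVec v v with hM
  set N : Matrix (Fin k) (Fin k) ℝ :=
    Ω⁻¹ + (1 - t)⁻¹ • vecMulVec (Ω⁻¹.mulVec v) (Ω⁻¹.mulVec v) with hN
  have hMN : M * N = 1 := by
    rw [hM, hN, Matrix.sub_mul, Matrix.mul_add, Matrix.mul_add,
      Matrix.mul_smul, Matrix.mul_smul, Matrix.mul_nonsing_inv _ hΩdet]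
    have e1 : Ω * vecMulVec (Ω⁻¹.mulVec v) (Ω⁻¹.mulVec v)
        = vecMulVec v (Ω⁻¹.mulVec v) := by
      rw [aux_mul_vecMulVec, Matrix.mulVec_mulVec, Matrix.mul_nonsing_inv _ hΩdet,
        Matrix.one_mulVec]
    have e2 : vecMulVec v v * Ω⁻¹ = vecMulVec v (Ω⁻¹.mulVec v) := by
      rw [aux_vecMulVec_mul, hΩiT]
    have e3 : vecMulVec v v * vecMulVec (Ω⁻¹.mulVec v) (Ω⁻¹.mulVec v)
        = t • vecMulVec v (Ω⁻¹.mulVec v) := by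
      rw [aux_vecMulVec_mul]
      have hwwT : (vecMulVec (Ω⁻¹.mulVec v) (Ω⁻¹.mulVec v))ᵀ
          = vecMulVec (Ω⁻¹.mulVec v) (Ω⁻¹.mulVec v) := by
        ext i j; simp [vecMulVec_apply, Matrix.transpose_apply, mul_comm]
      have h2 : (vecMulVec (Ω⁻¹.mulVec v) (Ω⁻¹.mulVec v)).mulVec v
          = t • Ω⁻¹.mulVec v := by
        rw [aux_vecMulVec_mulVec]
        congr 1
        rw [ht, dotProduct_comm]
      rw [hwwT, h2, aux_vecMulVec_smul]
    rw [e1, e2, e3, smul_smul]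
    match_scalars <;> field_simp <;> ring
  have hMinv : M⁻¹ = N := Matrix.inv_eq_right_inv hMN
  -- the matrix in the statement is M
  have hMeq : Ω - dg * vecMulVec μz μz * dg = M := by
    rw [hM, aux_mul_vecMulVec, aux_vecMulVec_mul, hdgT, ← hv]
  -- argument rewriting
  set z : Fin k → ℝ := y - (1/2 : ℝ) • (ξ₁ + ξ₂) with hz
  have harg : y - (1/2 : ℝ) • (ξ₁ + ξ₂ + (2:ℝ) • dg.mulVec μz) = z - v := by
    rw [hz, hv]
    ext i
    simp [Pi.smul_apply, smul_eq_mul]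
    ring
  -- the Fisher discriminant equals the normal-theory one
  have hfisher : a ⬝ᵥ M⁻¹.mulVec (z - v) = a ⬝ᵥ Ω⁻¹.mulVec z := by
    rw [hMinv, hN, Matrix.add_mulVec, dotProduct_add, Matrix.smul_mulVec,
      dotProduct_smul, aux_vecMulVec_mulVec, dotProduct_smul, smul_eq_mul,
      smul_eq_mul, hav, mul_zero, mul_zero, add_zero, Matrix.mulVec_sub,
      dotProduct_sub, hav, sub_zero]
  calc
    a ⬝ᵥ Ω⁻¹.mulVec z
        + Real.log (2 * stdNormCDF (α ⬝ᵥ dg⁻¹.mulVec (y - ξ₁)))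
        - Real.log (2 * stdNormCDF (α ⬝ᵥ dg⁻¹.mulVec (y - ξ₂)))
        + Real.log (pr₁ / pr₂)
      = a ⬝ᵥ Ω⁻¹.mulVec z + Real.log (pr₁ / pr₂) := by rw [hw]; ring
    _ = a ⬝ᵥ M⁻¹.mulVec (z - v) + Real.log (pr₁ / pr₂) := by rw [hfisher]
    _ = a ⬝ᵥ (Ω - dg * vecMulVec μz μz * dg)⁻¹.mulVec
          (y - (1/2 : ℝ) • (ξ₁ + ξ₂ + (2:ℝ) • dg.mulVec μz)) + Real.log (pr₁ / pr₂) := by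
        rw [hMeq, harg]
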